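/- Let G be a finite subgroup of S_n, χ an irreducible complex character of G, and e_χ(u), e_χ̄(v) the idempotents (χ(1)/|G|)Σ_{g∈G} χ(g) g^{-1} acting by permuting the variables u_1,...,u_n and v_1,...,v_n respectively. Then for any formal power series f(t) = Σ f_M t^M, applying e_χ in the u-variables to the product ∏_{i=1}^n f(t u_i v_i) gives the same result as applying e_χ̄ in the v-variables, and both equal Σ_{m ∈ Z_{≥0}^n} t^{|m|} (∏_i f_{m_i}) · (e_χ(u)(u^m)) · (e_χ̄(v)(v^m)). -/

import Mathlib

open scoped Classical

noncomputable section MasterAux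

section TraceConj
open Module Polynomial

lemma trace_pow_conj {V : Type} [AddCommGroup V] [Module ℂ V] [FiniteDimensional ℂ V]
    (f : Module.End ℂ V) (N : ℕ) (hN : 0 < N) (h : f ^ N = 1) :
    LinearMap.trace ℂ V (f ^ (N - 1)) = (starRingEnd ℂ) (LinearMap.trace ℂ V f) := by
  classical
  -- semisimplicity
  have hsq : Squarefree (X ^ N - 1 : ℂ[X]) := by
    refine (Polynomial.X_pow_sub_one_separable_iff.mpr ?_).squarefree
    exact_mod_cast Nat.cast_ne_zero.mpr hN.ne'
  have haev : aeval f (X ^ N - 1 : ℂ[X]) = 0 := by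
    simp [map_sub, map_pow, h]
  have hss : f.IsSemisimple := Module.End.isSemisimple_of_squarefree_aeval_eq_zero hsq haev
  -- eigenvalues are N-th roots of unity
  have hev : ∀ μ : ℂ, f.eigenspace μ ≠ ⊥ → μ ^ N = 1 := by
    intro μ hμ
    have h1 : f.HasEigenvalue μ := hμ
    have h2 : (f ^ N).HasEigenvalue (μ ^ N) := h1.pow N
    rw [h] at h2
    obtain ⟨v, hv, hv0⟩ := h2.exists_hasEigenvector
    have hv' : v ∈ (1 : Module.End ℂ V).eigenspace (μ ^ N) := hv
    rw [Module.End.mem_eigenspace_iff] at hv'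
    simp only [Module.End.one_apply] at hv'
    by_contra hne
    exact hv0 (by
      have : (μ ^ N - 1) • v = 0 := by rw [sub_smul, one_smul, ← hv', sub_self]
      exact (smul_eq_zero.mp this).resolve_left (sub_ne_zero.mpr hne) )
  -- the finite index set of candidate eigenvalues
  set s : Finset ℂ := (Polynomial.nthRoots N (1:ℂ)).toFinset with hs
  have hmem : ∀ μ : ℂ, μ ∈ s ↔ μ ^ N = 1 := by
    intro μ; simp [hs, Polynomial.mem_nthRoots hN]
  -- internal direct sum decomposition
  have hindep : iSupIndep (fun μ : s => f.eigenspace μ.val) :=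
    f.eigenspaces_iSupIndep.comp Subtype.val_injective
  have htop : (⨆ μ : ℂ, f.eigenspace μ) = ⊤ := by
    have h1 := Module.End.iSup_maxGenEigenspace_eq_top f
    calc (⨆ μ : ℂ, f.eigenspace μ) = ⨆ μ : ℂ, f.maxGenEigenspace μ := by
          refine iSup_congr fun μ => ?_
          exact (hss.isFinitelySemisimple.maxGenEigenspace_eq_eigenspace μ).symm
    _ = ⊤ := h1
  have htop' : (⨆ μ : s, f.eigenspace μ.val) = ⊤ := by
    rw [← htop]
    refine le_antisymm (iSup_le fun μ => le_iSup (fun ν : ℂ => f.eigenspace ν) μ.val)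
      (iSup_le fun μ => ?_)
    by_cases hb : f.eigenspace μ = ⊥
    · simp [hb]
    · exact le_iSup_of_le (⟨μ, (hmem μ).mpr (hev μ hb)⟩ : s) le_rfl
  have hint : DirectSum.IsInternal (fun μ : s => f.eigenspace μ.val) :=
    (DirectSum.isInternal_submodule_iff_iSupIndep_and_iSup_eq_top _).mpr ⟨hindep, htop'⟩
  -- restrictions
  have hpowmem : ∀ (j : ℕ) (μ : ℂ) (x : V), x ∈ f.eigenspace μ → (f ^ j) x = μ ^ j • x := by
    intro j μ x hx
    induction j with
    | zero => simp
    | succ j ih =>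
        rw [pow_succ, pow_succ, Module.End.mul_apply, Module.End.mem_eigenspace_iff.mp hx,
          map_smul, ih, smul_smul, mul_comm]
  have hmapsTo : ∀ (j : ℕ) (μ : s), Set.MapsTo (f ^ j) (f.eigenspace μ.val) (f.eigenspace μ.val) := by
    intro j μ x hx
    rw [SetLike.mem_coe] at hx ⊢
    rw [hpowmem j μ.val x hx]
    exact Submodule.smul_mem _ _ hx
  have htr : ∀ (j : ℕ), LinearMap.trace ℂ V (f ^ j)
      = ∑ μ : s, (μ.val ^ j) * (Module.finrank ℂ (f.eigenspace μ.val)) := by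
    intro j
    rw [LinearMap.trace_eq_sum_trace_restrict hint (hmapsTo j)]
    refine Finset.sum_congr rfl fun μ _ => ?_
    have : (f ^ j).restrict (hmapsTo j μ) = (μ.val ^ j) • LinearMap.id := by
      ext x
      simp [LinearMap.restrict_apply, LinearMap.coe_restrict_apply, hpowmem j μ.val x.1 x.2]
      exact hpowmem j μ.val x.1 x.2
    rw [this, map_smul, LinearMap.trace_id, smul_eq_mul]
  have hconj : ∀ μ : s, (starRingEnd ℂ) μ.val = μ.val ^ (N - 1) := by
    intro μ
    have hμN : μ.val ^ N = 1 := (hmem μ.val).mp μ.2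
    have hne : μ.val ≠ 0 := by
      intro h0; rw [h0, zero_pow hN.ne'] at hμN; exact zero_ne_one hμN
    have habs : ‖μ.val‖ = 1 := by
      have hpow : ‖μ.val‖ ^ N = 1 := by
        rw [← norm_pow, hμN, norm_one]
      rcases lt_trichotomy (‖μ.val‖) 1 with hlt | heq | hgt
      · have := pow_lt_one₀ (norm_nonneg μ.val) hlt hN.ne'
        rw [hpow] at this; exact absurd this (lt_irrefl 1)
      · exact heq
      · have := one_lt_pow₀ hgt hN.ne'
        rw [hpow] at this; exact absurd this (lt_irrefl 1)
    have h1 : (starRingEnd ℂ) μ.val * μ.val = 1 := by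
      rw [mul_comm, Complex.mul_conj, ← Complex.sq_norm, habs]; norm_num
    have h2 : μ.val ^ (N - 1) * μ.val = 1 := by
      rw [← pow_succ, Nat.sub_add_cancel hN, hμN]
    exact mul_right_cancel₀ hne (h1.trans h2.symm)
  rw [htr (N-1)]
  have h1 : LinearMap.trace ℂ V f = ∑ μ : s, μ.val * (Module.finrank ℂ (f.eigenspace μ.val)) := by
    simpa using htr 1
  rw [h1, map_sum]
  refine Finset.sum_congr rfl fun μ _ => ?_
  rw [map_mul, hconj μ, map_natCast]

end TraceConj

section CharFacts
open CategoryTheory Module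

variable {G : Type} [Group G] [Fintype G]

lemma char_inv' (V : FDRep ℂ G) (g : G) :
    V.character g⁻¹ = (starRingEnd ℂ) (V.character g) := by
  have hN : 0 < orderOf g := orderOf_pos g
  have hpow : (V.ρ g) ^ (orderOf g) = 1 := by
    rw [← map_pow, pow_orderOf_eq_one, map_one]
  have hg : g⁻¹ = g ^ (orderOf g - 1) := by
    refine (eq_inv_of_mul_eq_one_left ?_).symm
    rw [← pow_succ, Nat.sub_add_cancel hN, pow_orderOf_eq_one]
  rw [show V.character g⁻¹ = LinearMap.trace ℂ V (V.ρ g⁻¹) from rfl, hg, map_pow]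
  exact trace_pow_conj (V.ρ g) (orderOf g) hN hpow

lemma conv_ident (V : FDRep ℂ G) (hV : Simple V) :
    V.character 1 ≠ 0 ∧ ∀ g : G, V.character 1 * ∑ h : G, V.character (g * h) * V.character h⁻¹
      = (Fintype.card G : ℂ) * V.character g := by
  classical
  have hcard : (Fintype.card G : ℂ) ≠ 0 := Nat.cast_ne_zero.mpr Fintype.card_ne_zero
  set Tlin : V →ₗ[ℂ] V := ∑ h : G, V.character h⁻¹ • (V.ρ h : V →ₗ[ℂ] V) with hT
  have hTapp : ∀ v : V, Tlin v = ∑ h : G, V.character h⁻¹ • (V.ρ h v) := by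
    intro v; simp [hT, LinearMap.sum_apply]
  have hcomm : ∀ (g : G) (v : V), Tlin (V.ρ g v) = V.ρ g (Tlin v) := by
    intro g v
    rw [hTapp, hTapp, map_sum]
    have lhs_eq : ∀ h : G, V.character h⁻¹ • V.ρ h (V.ρ g v)
        = V.character h⁻¹ • V.ρ (h * g) v := by
      intro h; rw [map_mul, Module.End.mul_apply]
    have rhs_eq : ∀ h : G, V.ρ g (V.character h⁻¹ • V.ρ h v)
        = V.character h⁻¹ • V.ρ (g * h) v := by
      intro h; rw [map_smul, map_mul, Module.End.mul_apply]
    simp only [lhs_eq, rhs_eq]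
    refine (Fintype.sum_equiv ((Equiv.mulLeft g).trans (Equiv.mulRight g⁻¹)) _ _ fun h => ?_).symm
    simp only [Equiv.trans_apply, Equiv.coe_mulLeft, Equiv.coe_mulRight]
    have h1 : (g * h * g⁻¹)⁻¹ = g * h⁻¹ * g⁻¹ := by group
    have h2 : g * h * g⁻¹ * g = g * h := by group
    rw [h1, h2, FDRep.char_conj]
  let T : V ⟶ V := Action.Hom.mk (FGModuleCat.ofHom Tlin) (by intro g; ext v; exact hcomm g v)
  obtain ⟨c, hc⟩ := endomorphism_simple_eq_smul_id (𝕜 := ℂ) T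
  have htrT : LinearMap.trace ℂ V Tlin = (Fintype.card G : ℂ) := by
    rw [hT, map_sum]
    have horth := FDRep.char_orthonormal (k := ℂ) (G := G) V V
    rw [if_pos ⟨Iso.refl V⟩] at horth
    have horth2 : (Nat.card G : ℂ)⁻¹ *
        (∑ h : G, V.character h * V.character h⁻¹) = 1 := horth.trans (by norm_num)
    have h2 : (∑ h : G, V.character h * V.character h⁻¹) = (Fintype.card G : ℂ) := by
      rw [Nat.card_eq_fintype_card, inv_mul_eq_one₀ hcard] at horth2
      exact horth2.symm
    rw [← h2]
    refine Finset.sum_congr rfl fun h _ => ?_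
    rw [map_smul, smul_eq_mul, mul_comm]
    rfl
  have hchom : Tlin = c • LinearMap.id := by
    have h := congrArg (fun T : V ⟶ V => T.hom.hom.hom) hc
    exact h.symm
  have hcval : c * V.character 1 = (Fintype.card G : ℂ) := by
    rw [← htrT, hchom, map_smul, LinearMap.trace_id, smul_eq_mul, FDRep.char_one]
  have hchi1 : V.character 1 ≠ 0 := by
    intro h0
    exact hcard (by rw [← hcval, h0, mul_zero])
  refine ⟨hchi1, fun g => ?_⟩
  have h1 : (V.ρ g : V →ₗ[ℂ] V) ∘ₗ Tlin = ∑ h : G, V.character h⁻¹ • (V.ρ (g * h) : V →ₗ[ℂ] V) := by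
    ext v
    rw [LinearMap.comp_apply, hTapp, map_sum, LinearMap.sum_apply]
    refine Finset.sum_congr rfl fun h _ => ?_
    rw [map_smul, LinearMap.smul_apply, map_mul, Module.End.mul_apply]
  have h2 : LinearMap.trace ℂ V ((V.ρ g : V →ₗ[ℂ] V) ∘ₗ Tlin)
      = ∑ h : G, V.character h⁻¹ * V.character (g * h) := by
    rw [h1, map_sum]
    refine Finset.sum_congr rfl fun h _ => ?_
    rw [map_smul, smul_eq_mul]
    rfl
  have h3 : LinearMap.trace ℂ V ((V.ρ g : V →ₗ[ℂ] V) ∘ₗ Tlin) = c * V.character g := by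
    rw [hchom]
    have : (V.ρ g : V →ₗ[ℂ] V) ∘ₗ (c • LinearMap.id) = c • (V.ρ g : V →ₗ[ℂ] V) := by
      ext v; simp
    rw [this, map_smul, smul_eq_mul]
    rfl
  have h4 : ∑ h : G, V.character (g * h) * V.character h⁻¹ = c * V.character g := by
    rw [← h3, h2]
    exact Finset.sum_congr rfl fun h _ => mul_comm _ _
  rw [h4, show V.character 1 * (c * V.character g) = c * V.character 1 * V.character g by ring,
    hcval]

end CharFacts

section Combinatorial
open MvPolynomial Finset

/-- `u^m` -/
def Uu (n : ℕ) (m : Fin n → ℕ) : MvPolynomial (Fin n ⊕ Fin n) ℂ :=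
  ∏ i : Fin n, MvPolynomial.X (Sum.inl i) ^ m i

/-- `v^m` -/
def Wv (n : ℕ) (m : Fin n → ℕ) : MvPolynomial (Fin n ⊕ Fin n) ℂ :=
  ∏ i : Fin n, MvPolynomial.X (Sum.inr i) ^ m i

lemma rename_l_Uu {n : ℕ} (σ : Equiv.Perm (Fin n)) (m : Fin n → ℕ) :
    MvPolynomial.rename (Sum.map (⇑σ) (id : Fin n → Fin n)) (Uu n m) = Uu n (m ∘ ⇑σ⁻¹) := by
  unfold Uu
  rw [map_prod]
  simp only [map_pow, rename_X, Sum.map_inl]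
  have := Equiv.prod_comp σ (fun i => MvPolynomial.X (σ := Fin n ⊕ Fin n) (R := ℂ) (Sum.inl i) ^ (m ∘ ⇑σ⁻¹) i)
  rw [← this]
  refine Finset.prod_congr rfl fun i _ => ?_
  simp [Function.comp]

lemma rename_l_Wv {n : ℕ} (σ : Equiv.Perm (Fin n)) (m : Fin n → ℕ) :
    MvPolynomial.rename (Sum.map (⇑σ) (id : Fin n → Fin n)) (Wv n m) = Wv n m := by
  unfold Wv
  rw [map_prod]
  simp only [map_pow, rename_X, Sum.map_inr, id_eq]

lemma rename_r_Uu {n : ℕ} (σ : Equiv.Perm (Fin n)) (m : Fin n → ℕ) :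
    MvPolynomial.rename (Sum.map (id : Fin n → Fin n) (⇑σ)) (Uu n m) = Uu n m := by
  unfold Uu
  rw [map_prod]
  simp only [map_pow, rename_X, Sum.map_inl, id_eq]

lemma rename_r_Wv {n : ℕ} (σ : Equiv.Perm (Fin n)) (m : Fin n → ℕ) :
    MvPolynomial.rename (Sum.map (id : Fin n → Fin n) (⇑σ)) (Wv n m) = Wv n (m ∘ ⇑σ⁻¹) := by
  unfold Wv
  rw [map_prod]
  simp only [map_pow, rename_X, Sum.map_inr]
  have := Equiv.prod_comp σ (fun i => MvPolynomial.X (σ := Fin n ⊕ Fin n) (R := ℂ) (Sum.inr i) ^ (m ∘ ⇑σ⁻¹) i)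
  rw [← this]
  refine Finset.prod_congr rfl fun i _ => ?_
  simp [Function.comp]


lemma prod_C_mul_pow (n : ℕ) (fc : ℕ → ℂ) (μ : Fin n → ℕ) :
    (∏ i : Fin n, (MvPolynomial.C (fc (μ i)) *
        (MvPolynomial.X (Sum.inl i) * MvPolynomial.X (Sum.inr i)) ^ (μ i)
          : MvPolynomial (Fin n ⊕ Fin n) ℂ))
    = (∏ i, fc (μ i)) • (Uu n μ * Wv n μ) := by
  rw [Finset.prod_mul_distrib, ← map_prod (MvPolynomial.C : ℂ →+* MvPolynomial (Fin n ⊕ Fin n) ℂ) (fun i => fc (μ i)) Finset.univ]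
  simp_rw [mul_pow]
  rw [Finset.prod_mul_distrib]
  rw [show (Uu n μ * Wv n μ) = (∏ i : Fin n, MvPolynomial.X (σ := Fin n ⊕ Fin n) (R := ℂ) (Sum.inl i) ^ μ i) *
      ∏ i : Fin n, MvPolynomial.X (Sum.inr i) ^ μ i from rfl]
  rw [MvPolynomial.smul_eq_C_mul]

lemma sum_finsupp_eq (n k : ℕ) (l : Fin n →₀ ℕ) (hl : l ∈ Finset.finsuppAntidiag Finset.univ k) :
    ∑ x : Fin n, l x = k := by
  rw [Finset.mem_finsuppAntidiag] at hl
  exact hl.1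

lemma le_of_mem_antidiag {n k : ℕ} {l : Fin n →₀ ℕ} (hl : l ∈ Finset.finsuppAntidiag Finset.univ k)
    (x : Fin n) : l x ≤ k := by
  rw [← sum_finsupp_eq n k l hl]
  exact Finset.single_le_sum (f := fun i => l i) (fun i _ => Nat.zero_le _) (Finset.mem_univ x)

/-- the coefficient of `t^k` in `∏ f(t u_i v_i)` -/
lemma coeff_P (n k : ℕ) (fc : ℕ → ℂ) :
    (PowerSeries.coeff k) (∏ i : Fin n, PowerSeries.mk fun M =>
        MvPolynomial.C (fc M) *
          (MvPolynomial.X (Sum.inl i) * MvPolynomial.X (Sum.inr i)) ^ M)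
    = ∑ m : Fin n → Fin (k + 1),
        if (∑ i, (m i : ℕ)) = k then
          (∏ i, fc (m i)) • (Uu n (fun i => (m i : ℕ)) * Wv n (fun i => (m i : ℕ)))
        else 0 := by
  rw [PowerSeries.coeff_prod, ← Finset.sum_filter]
  refine Finset.sum_nbij'
    (i := fun l => fun x : Fin n => (⟨min (l x) k, by omega⟩ : Fin (k+1)))
    (j := fun m => Finsupp.equivFunOnFinite.symm (fun x => (m x : ℕ)))
    ?_ ?_ ?_ ?_ ?_
  · intro l hl
    rw [Finset.mem_filter]
    refine ⟨Finset.mem_univ _, ?_⟩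
    have h1 : ∀ x : Fin n, min (l x) k = l x := fun x => min_eq_left (le_of_mem_antidiag hl x)
    calc (∑ x : Fin n, ((⟨min (l x) k, by omega⟩ : Fin (k+1)) : ℕ))
        = ∑ x : Fin n, l x := Finset.sum_congr rfl fun x _ => h1 x
      _ = k := sum_finsupp_eq n k l hl
  · intro m hm
    rw [Finset.mem_filter] at hm
    rw [Finset.mem_finsuppAntidiag]
    refine ⟨?_, Finset.subset_univ _⟩
    rw [show (Finset.univ.sum ⇑(Finsupp.equivFunOnFinite.symm (fun x : Fin n => (m x : ℕ))))
        = ∑ x : Fin n, (m x : ℕ) from Finset.sum_congr rfl fun x _ => rfl]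
    exact hm.2
  · intro l hl
    ext x
    simp only [Finsupp.coe_equivFunOnFinite_symm]
    exact min_eq_left (le_of_mem_antidiag hl x)
  · intro m hm
    funext x
    apply Fin.ext
    simp only [Finsupp.coe_equivFunOnFinite_symm]
    exact min_eq_left (Nat.lt_succ_iff.mp (m x).2)
  · intro l hl
    have h1 : ∀ x : Fin n, ((⟨min (l x) k, by omega⟩ : Fin (k+1)) : ℕ) = l x :=
      fun x => min_eq_left (le_of_mem_antidiag hl x)
    rw [show (∏ x : Fin n, (PowerSeries.coeff (l x))
          (PowerSeries.mk fun M => MvPolynomial.C (fc M) *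
            (MvPolynomial.X (Sum.inl x) * MvPolynomial.X (Sum.inr x)) ^ M))
        = ∏ x : Fin n, MvPolynomial.C (fc (l x)) *
            (MvPolynomial.X (Sum.inl x) * MvPolynomial.X (Sum.inr x)) ^ (l x) from
      Finset.prod_congr rfl fun x _ => by rw [PowerSeries.coeff_mk]]
    rw [prod_C_mul_pow]
    have h2 : ∀ x : Fin n, l x ⊓ k = l x := fun x => min_eq_left (le_of_mem_antidiag hl x)
    simp only [h2]

section Ops
variable {n : ℕ} {G : Type} [Group G] [Fintype G]

/-- idempotent-type operator acting on the `u` variables -/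
def Eop (n : ℕ) {G : Type} [Group G] [Fintype G] (φ : G →* Equiv.Perm (Fin n))
    (a : G → ℂ) (c : ℂ) :
    MvPolynomial (Fin n ⊕ Fin n) ℂ →ₗ[ℂ] MvPolynomial (Fin n ⊕ Fin n) ℂ :=
  c • ∑ g : G, a g •
    (MvPolynomial.rename (Sum.map (⇑(φ g⁻¹)) (id : Fin n → Fin n))).toLinearMap

/-- idempotent-type operator acting on the `v` variables -/
def Fop (n : ℕ) {G : Type} [Group G] [Fintype G] (φ : G →* Equiv.Perm (Fin n))
    (a : G → ℂ) (c : ℂ) :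
    MvPolynomial (Fin n ⊕ Fin n) ℂ →ₗ[ℂ] MvPolynomial (Fin n ⊕ Fin n) ℂ :=
  c • ∑ g : G, a g •
    (MvPolynomial.rename (Sum.map (id : Fin n → Fin n) (⇑(φ g⁻¹)))).toLinearMap

lemma Eop_apply (φ : G →* Equiv.Perm (Fin n)) (a : G → ℂ) (c : ℂ)
    (p : MvPolynomial (Fin n ⊕ Fin n) ℂ) :
    Eop n φ a c p = c • ∑ g : G, a g •
      MvPolynomial.rename (Sum.map (⇑(φ g⁻¹)) (id : Fin n → Fin n)) p := by
  simp [Eop, LinearMap.sum_apply]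

lemma Fop_apply (φ : G →* Equiv.Perm (Fin n)) (a : G → ℂ) (c : ℂ)
    (p : MvPolynomial (Fin n ⊕ Fin n) ℂ) :
    Fop n φ a c p = c • ∑ g : G, a g •
      MvPolynomial.rename (Sum.map (id : Fin n → Fin n) (⇑(φ g⁻¹))) p := by
  simp [Fop, LinearMap.sum_apply]

lemma perm_inv_inv (φ : G →* Equiv.Perm (Fin n)) (g : G) (m : Fin n → ℕ) :
    m ∘ ⇑(φ g⁻¹)⁻¹ = m ∘ ⇑(φ g) := by
  rw [map_inv, inv_inv]

lemma Eop_UW (φ : G →* Equiv.Perm (Fin n)) (a : G → ℂ) (c : ℂ) (m m' : Fin n → ℕ) :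
    Eop n φ a c (Uu n m * Wv n m')
      = c • ∑ g : G, a g • (Uu n (m ∘ ⇑(φ g)) * Wv n m') := by
  rw [Eop_apply]
  congr 1
  refine Finset.sum_congr rfl fun g _ => ?_
  rw [map_mul, rename_l_Uu, rename_l_Wv, perm_inv_inv]

lemma Fop_UW (φ : G →* Equiv.Perm (Fin n)) (a : G → ℂ) (c : ℂ) (m m' : Fin n → ℕ) :
    Fop n φ a c (Uu n m * Wv n m')
      = c • ∑ g : G, a g • (Uu n m * Wv n (m' ∘ ⇑(φ g))) := by
  rw [Fop_apply]
  congr 1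
  refine Finset.sum_congr rfl fun g _ => ?_
  rw [map_mul, rename_r_Uu, rename_r_Wv, perm_inv_inv]

lemma Eop_U (φ : G →* Equiv.Perm (Fin n)) (a : G → ℂ) (c : ℂ) (m : Fin n → ℕ) :
    Eop n φ a c (Uu n m) = c • ∑ g : G, a g • Uu n (m ∘ ⇑(φ g)) := by
  rw [Eop_apply]
  congr 1
  refine Finset.sum_congr rfl fun g _ => ?_
  rw [rename_l_Uu, perm_inv_inv]

lemma Fop_W (φ : G →* Equiv.Perm (Fin n)) (a : G → ℂ) (c : ℂ) (m : Fin n → ℕ) :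
    Fop n φ a c (Wv n m) = c • ∑ g : G, a g • Wv n (m ∘ ⇑(φ g)) := by
  rw [Fop_apply]
  congr 1
  refine Finset.sum_congr rfl fun g _ => ?_
  rw [rename_r_Wv, perm_inv_inv]

/-- the basic symmetrized sum -/
def SS (n k : ℕ) {G : Type} [Group G] [Fintype G] (φ : G →* Equiv.Perm (Fin n))
    (fc : ℕ → ℂ) (g h : G) : MvPolynomial (Fin n ⊕ Fin n) ℂ :=
  ∑ m : Fin n → Fin (k + 1),
    if (∑ i, (m i : ℕ)) = k then
      (∏ i, fc (m i)) •
        (Uu n ((fun i => (m i : ℕ)) ∘ ⇑(φ g)) * Wv n ((fun i => (m i : ℕ)) ∘ ⇑(φ h)))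
    else 0

lemma SS_shift (k : ℕ) (φ : G →* Equiv.Perm (Fin n)) (fc : ℕ → ℂ) (τ g h : G) :
    SS n k φ fc g h = SS n k φ fc (τ * g) (τ * h) := by
  unfold SS
  refine Fintype.sum_equiv (Equiv.arrowCongr (φ τ : Fin n ≃ Fin n) (Equiv.refl (Fin (k+1)))) _ _
    fun m => ?_
  have e1 : ∀ i, ((Equiv.arrowCongr (φ τ : Fin n ≃ Fin n) (Equiv.refl (Fin (k+1)))) m) i
      = m ((φ τ).symm i) := fun i => rfl
  have hcond : (∑ i, ((m ((φ τ).symm i) : ℕ))) = ∑ i, (m i : ℕ) :=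
    Equiv.sum_comp ((φ τ).symm : Fin n ≃ Fin n) (fun i => (m i : ℕ))
  have hprod : (∏ i, fc (m ((φ τ).symm i))) = ∏ i, fc (m i) :=
    Equiv.prod_comp ((φ τ).symm : Fin n ≃ Fin n) (fun i => fc (m i))
  simp only [e1, hcond, hprod]
  by_cases hc : (∑ i, (m i : ℕ)) = k
  · rw [if_pos hc, if_pos hc]
    have hu : ((fun i => ((m ((φ τ).symm i)) : ℕ)) ∘ ⇑(φ (τ * g)))
        = (fun i => (m i : ℕ)) ∘ ⇑(φ g) := by
      funext i
      simp [map_mul, Equiv.Perm.mul_apply, Function.comp]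
    have hw : ((fun i => ((m ((φ τ).symm i)) : ℕ)) ∘ ⇑(φ (τ * h)))
        = (fun i => (m i : ℕ)) ∘ ⇑(φ h) := by
      funext i
      simp [map_mul, Equiv.Perm.mul_apply, Function.comp]
    rw [hu, hw]
  · rw [if_neg hc, if_neg hc]

/-- generic sum-swapping identity -/
lemma sum_swap_ite {α : Type} [Fintype α] {β : Type} [Fintype β] (c : ℂ) (w : α → ℂ)
    (cond : β → Prop) [DecidablePred cond] (coefm : β → ℂ) (X : α → β → MvPolynomial (Fin n ⊕ Fin n) ℂ) :
    c • ∑ g : α, w g • ∑ m : β, (if cond m then coefm m • X g m else 0)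
      = ∑ m : β, (if cond m then coefm m • (c • ∑ g : α, w g • X g m) else 0) := by
  simp only [Finset.smul_sum, smul_ite, smul_zero, smul_smul]
  rw [Finset.sum_comm]
  refine Finset.sum_congr rfl fun m _ => ?_
  by_cases hc : cond m
  · simp only [if_pos hc]
    refine Finset.sum_congr rfl fun g _ => ?_
    congr 1
    ring
  · simp only [if_neg hc, Finset.sum_const_zero]

lemma mul_expand {α : Type} [Fintype α] (c c' : ℂ) (a b : α → ℂ)
    (X Y : α → MvPolynomial (Fin n ⊕ Fin n) ℂ) :
    (c • ∑ g : α, a g • X g) * (c' • ∑ h : α, b h • Y h)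
      = (c * c') • ∑ p : α × α, (a p.1 * b p.2) • (X p.1 * Y p.2) := by
  rw [smul_mul_smul_comm, Finset.sum_mul_sum]
  rw [Fintype.sum_prod_type]
  congr 1
  refine Finset.sum_congr rfl fun g _ => Finset.sum_congr rfl fun h _ => ?_
  rw [smul_mul_smul_comm]

end Ops

end Combinatorial

end MasterAux

/-- The master bosonic immanant identity: for a finite group `G` embedded in `S_n`
(acting on the `u`-variables and on the `v`-variables by permutations), an irreducible
complex character `χ` of `G`, and a formal power series `f(t) = ∑ f_M t^M`, applying the
idempotent `e_χ = (χ(1)/|G|) ∑_g χ(g) g⁻¹` in the `u`-variables to `∏_i f(t u_i v_i)`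
agrees with applying `e_χ̄` in the `v`-variables, and both equal
`∑_{m ∈ ℤ_{≥0}^n} t^{|m|} (∏_i f_{m_i}) (e_χ(u)(u^m)) (e_χ̄(v)(v^m))`,
stated coefficient-wise in `t`. -/
theorem stmt3 (n : ℕ) (hn : 1 ≤ n) (G : Type) [Group G] [Fintype G]
    (φ : G →* Equiv.Perm (Fin n)) (hφ : Function.Injective φ)
    (V : FDRep ℂ G) (hV : CategoryTheory.Simple V)
    (fc : ℕ → ℂ) (k : ℕ) :
    let χ : G → ℂ := V.character
    -- action of `e_χ` on the `u`-variables
    let Eu : MvPolynomial (Fin n ⊕ Fin n) ℂ → MvPolynomial (Fin n ⊕ Fin n) ℂ :=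
      fun p => (χ 1 / (Fintype.card G : ℂ)) •
        ∑ g : G, χ g • MvPolynomial.rename (Sum.map (⇑(φ g⁻¹)) id) p
    -- action of `e_χ̄` on the `v`-variables
    let Ev : MvPolynomial (Fin n ⊕ Fin n) ℂ → MvPolynomial (Fin n ⊕ Fin n) ℂ :=
      fun p => ((starRingEnd ℂ) (χ 1) / (Fintype.card G : ℂ)) •
        ∑ g : G, (starRingEnd ℂ) (χ g) • MvPolynomial.rename (Sum.map id (⇑(φ g⁻¹))) p
    -- the product `∏_{i=1}^n f(t u_i v_i)` as a power series in `t`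
    let P : PowerSeries (MvPolynomial (Fin n ⊕ Fin n) ℂ) :=
      ∏ i : Fin n, PowerSeries.mk fun M =>
        MvPolynomial.C (fc M) *
          (MvPolynomial.X (Sum.inl i) * MvPolynomial.X (Sum.inr i)) ^ M
    Eu ((PowerSeries.coeff k) P) = Ev ((PowerSeries.coeff k) P) ∧
    Eu ((PowerSeries.coeff k) P) =
      ∑ m : Fin n → Fin (k + 1),
        if (∑ i, (m i : ℕ)) = k then
          (∏ i : Fin n, fc (m i)) •
            (Eu (∏ i : Fin n, MvPolynomial.X (Sum.inl i) ^ (m i : ℕ)) *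
             Ev (∏ i : Fin n, MvPolynomial.X (Sum.inr i) ^ (m i : ℕ)))
        else 0 := by
  intro χ Eu Ev P
  have hcard : ((Fintype.card G : ℂ)) ≠ 0 := Nat.cast_ne_zero.mpr Fintype.card_ne_zero
  -- character facts, restated in terms of the local `χ`
  obtain ⟨hχ1, hconv0⟩ := conv_ident V hV
  have hχ1' : χ 1 ≠ 0 := hχ1
  have hconv : ∀ g : G, χ 1 * ∑ h : G, χ (g * h) * χ h⁻¹
      = (Fintype.card G : ℂ) * χ g := hconv0
  have hA : ∀ g : G, χ g⁻¹ = (starRingEnd ℂ) (χ g) := char_inv' V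
  have hmc : ∀ g h : G, χ (h * g) = χ (g * h) := fun g h => FDRep.char_mul_comm V g h
  have hconj1 : (starRingEnd ℂ) (χ 1) = χ 1 := by
    have := hA 1; rw [inv_one] at this; exact this.symm
  set c : ℂ := χ 1 / (Fintype.card G : ℂ) with hc
  set c' : ℂ := (starRingEnd ℂ) (χ 1) / (Fintype.card G : ℂ) with hc'
  have hEu : ∀ p, Eu p = Eop n φ χ c p := fun p => (Eop_apply φ χ c p).symm
  have hEv : ∀ p, Ev p = Fop n φ (fun g => (starRingEnd ℂ) (χ g)) c' p :=
    fun p => (Fop_apply φ _ c' p).symm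
  have hP : (PowerSeries.coeff k) P
      = ∑ m : Fin n → Fin (k + 1),
          if (∑ i, (m i : ℕ)) = k then
            (∏ i, fc (m i)) • (Uu n (fun i => (m i : ℕ)) * Wv n (fun i => (m i : ℕ)))
          else 0 := coeff_P n k fc
  have hSSg1 : ∀ g : G, SS n k φ fc g 1
      = ∑ m : Fin n → Fin (k + 1),
          if (∑ i, (m i : ℕ)) = k then
            (∏ i, fc (m i)) •
              (Uu n ((fun i => (m i : ℕ)) ∘ ⇑(φ g)) * Wv n (fun i => (m i : ℕ)))
          else 0 := by
    intro g
    unfold SS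
    simp only [map_one, Equiv.Perm.coe_one, Function.comp_id]
  have hSS1h : ∀ h : G, SS n k φ fc 1 h
      = ∑ m : Fin n → Fin (k + 1),
          if (∑ i, (m i : ℕ)) = k then
            (∏ i, fc (m i)) •
              (Uu n (fun i => (m i : ℕ)) * Wv n ((fun i => (m i : ℕ)) ∘ ⇑(φ h)))
          else 0 := by
    intro h
    unfold SS
    simp only [map_one, Equiv.Perm.coe_one, Function.comp_id]
  -- E1 : the u-side operator applied to the coefficient
  have E1 : Eop n φ χ c ((PowerSeries.coeff k) P) = c • ∑ g : G, χ g • SS n k φ fc g 1 := by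
    rw [hP, map_sum]
    rw [show (c • ∑ g : G, χ g • SS n k φ fc g 1)
        = ∑ m : Fin n → Fin (k + 1), if (∑ i, (m i : ℕ)) = k then
            (∏ i, fc (m i)) • (c • ∑ g : G, χ g •
              (Uu n ((fun i => (m i : ℕ)) ∘ ⇑(φ g)) * Wv n (fun i => (m i : ℕ)))) else 0 by
      simp only [hSSg1]
      exact sum_swap_ite c χ _ _ _]
    refine Finset.sum_congr rfl fun m _ => ?_
    rw [apply_ite (Eop n φ χ c), map_zero, map_smul, Eop_UW]
  -- E2 : the v-side operator applied to the coefficient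
  have E2 : Fop n φ (fun g => (starRingEnd ℂ) (χ g)) c' ((PowerSeries.coeff k) P)
      = c' • ∑ h : G, (starRingEnd ℂ) (χ h) • SS n k φ fc 1 h := by
    rw [hP, map_sum]
    rw [show (c' • ∑ h : G, (starRingEnd ℂ) (χ h) • SS n k φ fc 1 h)
        = ∑ m : Fin n → Fin (k + 1), if (∑ i, (m i : ℕ)) = k then
            (∏ i, fc (m i)) • (c' • ∑ h : G, (starRingEnd ℂ) (χ h) •
              (Uu n (fun i => (m i : ℕ)) * Wv n ((fun i => (m i : ℕ)) ∘ ⇑(φ h)))) else 0 by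
      simp only [hSS1h]
      exact sum_swap_ite c' _ _ _ _]
    refine Finset.sum_congr rfl fun m _ => ?_
    rw [apply_ite (Fop n φ (fun g => (starRingEnd ℂ) (χ g)) c'), map_zero, map_smul, Fop_UW]
  -- E3 : the fully-expanded double sum
  have E3 : (c * c') • ∑ p : G × G, (χ p.1 * (starRingEnd ℂ) (χ p.2)) • SS n k φ fc p.1 p.2
      = ∑ m : Fin n → Fin (k + 1), if (∑ i, (m i : ℕ)) = k then
          (∏ i, fc (m i)) • (Eop n φ χ c (Uu n (fun i => (m i : ℕ))) *
            Fop n φ (fun g => (starRingEnd ℂ) (χ g)) c' (Wv n (fun i => (m i : ℕ)))) else 0 := by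
    have hSSp : ∀ p : G × G, SS n k φ fc p.1 p.2
        = ∑ m : Fin n → Fin (k + 1), if (∑ i, (m i : ℕ)) = k then
            (∏ i, fc (m i)) • (Uu n ((fun i => (m i : ℕ)) ∘ ⇑(φ p.1)) *
              Wv n ((fun i => (m i : ℕ)) ∘ ⇑(φ p.2))) else 0 := fun p => rfl
    simp only [hSSp]
    rw [sum_swap_ite (c * c') (fun p : G × G => χ p.1 * (starRingEnd ℂ) (χ p.2)) _ _
      (fun (p : G × G) (m : Fin n → Fin (k+1)) =>
        Uu n ((fun i => (m i : ℕ)) ∘ ⇑(φ p.1)) * Wv n ((fun i => (m i : ℕ)) ∘ ⇑(φ p.2)))]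
    refine Finset.sum_congr rfl fun m _ => ?_
    refine if_congr Iff.rfl ?_ rfl
    congr 1
    rw [Eop_U, Fop_W, mul_expand]
  refine ⟨?_, ?_⟩
  · -- first identity : Eu = Ev on the coefficient
    rw [hEu, hEv, E1, E2]
    have step : ∑ h : G, (starRingEnd ℂ) (χ h) • SS n k φ fc 1 h
        = ∑ g : G, χ g • SS n k φ fc g 1 := by
      refine (Fintype.sum_equiv (Equiv.inv G) (fun g => χ g • SS n k φ fc g 1) _ fun x => ?_).symm
      simp only [Equiv.inv_apply]
      have h1 : SS n k φ fc 1 x⁻¹ = SS n k φ fc x 1 := by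
        rw [SS_shift k φ fc x 1 x⁻¹, mul_one, mul_inv_cancel]
      have h2 : (starRingEnd ℂ) (χ x⁻¹) = χ x := by
        have := hA x⁻¹; rw [inv_inv] at this; exact this.symm
      rw [h1, h2]
    rw [step, hc', hconj1, ← hc]
  · -- second identity : Eu = double-idempotent expansion
    simp only [hEu, hEv]
    have hUeq : ∀ (m : Fin n → Fin (k+1)),
        (∏ i : Fin n, (MvPolynomial.X (Sum.inl i) : MvPolynomial (Fin n ⊕ Fin n) ℂ) ^ (m i : ℕ))
        = Uu n (fun i => (m i : ℕ)) := fun m => rfl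
    have hWeq : ∀ (m : Fin n → Fin (k+1)),
        (∏ i : Fin n, (MvPolynomial.X (Sum.inr i) : MvPolynomial (Fin n ⊕ Fin n) ℂ) ^ (m i : ℕ))
        = Wv n (fun i => (m i : ℕ)) := fun m => rfl
    rw [E1]
    simp only [hUeq, hWeq]
    rw [← E3]
    -- key convolution identity
    have KeyB : ∀ g : G, ∑ h : G, χ (h * g) * (starRingEnd ℂ) (χ h)
        = (Fintype.card G : ℂ) * χ g / χ 1 := by
      intro g
      have h1 : ∑ h : G, χ (h * g) * (starRingEnd ℂ) (χ h) = ∑ h : G, χ (g * h) * χ h⁻¹ := by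
        refine Finset.sum_congr rfl fun h _ => ?_
        rw [← hA h, hmc g h]
      rw [h1, eq_div_iff hχ1', mul_comm]
      exact hconv g
    have step1 : ∑ p : G × G, (χ p.1 * (starRingEnd ℂ) (χ p.2)) • SS n k φ fc p.1 p.2
        = ∑ g : G, ((Fintype.card G : ℂ) * χ g / χ 1) • SS n k φ fc g 1 := by
      rw [Fintype.sum_prod_type, Finset.sum_comm]
      calc ∑ h : G, ∑ g : G, (χ g * (starRingEnd ℂ) (χ h)) • SS n k φ fc g h
          = ∑ h : G, ∑ g : G, (χ (h * g) * (starRingEnd ℂ) (χ h)) • SS n k φ fc g 1 := by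
            refine Finset.sum_congr rfl fun h _ => ?_
            refine (Fintype.sum_equiv (Equiv.mulLeft h)
              (fun g => (χ (h * g) * (starRingEnd ℂ) (χ h)) • SS n k φ fc g 1) _ fun x => ?_).symm
            simp only [Equiv.coe_mulLeft]
            congr 1
            rw [SS_shift k φ fc h x 1, mul_one]
        _ = ∑ g : G, ∑ h : G, (χ (h * g) * (starRingEnd ℂ) (χ h)) • SS n k φ fc g 1 :=
            Finset.sum_comm
        _ = ∑ g : G, ((Fintype.card G : ℂ) * χ g / χ 1) • SS n k φ fc g 1 := by
            refine Finset.sum_congr rfl fun g _ => ?_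
            rw [← Finset.sum_smul, KeyB g]
    rw [step1, Finset.smul_sum, Finset.smul_sum]
    refine Finset.sum_congr rfl fun g _ => ?_
    rw [smul_smul, smul_smul]
    congr 1
    rw [hc, hc', hconj1]
    field_simp
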